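/- For a polyhedral cone C and a face F of C, the map G ↦ A(G,C)* is an inclusion-reversing bijection from the set of faces of C containing F to the set of faces of the cone A(F,C)*; moreover, for every face G ⊇ F one has A(A(G,C)*, A(F,C)*) = A(F,G)*. -/

import Mathlib

open scoped RealInnerProductSpace
open scoped Classical

set_option linter.unusedSectionVars false
set_option linter.unusedVariables false
set_option maxHeartbeats 1000000

noncomputable section

variable {V : Type*} [NormedAddCommGroup V] [InnerProductSpace ℝ V] [FiniteDimensional ℝ V]

/-- A polyhedral cone: a finite intersection of closed halfspaces through the origin. -/
def IsPolyCone (C : Set V) : Prop :=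
  ∃ s : Finset V, C = ⋂ y ∈ s, {v : V | 0 ≤ ⟪v, y⟫}

/-- `F` is a face of the cone `C`: `F = C ∩ H_y` for some `y` (possibly `0`) with `C ⊆ H_y⁺`. -/
def IsFaceOf (F C : Set V) : Prop :=
  ∃ y : V, C ⊆ {v : V | 0 ≤ ⟪v, y⟫} ∧ F = C ∩ {v : V | ⟪v, y⟫ = 0}

/-- Dimension of a set: the dimension of its linear span. -/
def sdim (S : Set V) : ℕ := Module.finrank ℝ (Submodule.span ℝ S)

/-- Dual cone. -/
def dualCone (C : Set V) : Set V := {v : V | ∀ c ∈ C, 0 ≤ ⟪v, c⟫}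

/-- Angle cone `A(F, C) = { a • (x - z) : a > 0, x ∈ C, z ∈ relint F }`. -/
def angleCone (F C : Set V) : Set V :=
  {w : V | ∃ a : ℝ, 0 < a ∧ ∃ x ∈ C, ∃ z ∈ intrinsicInterior ℝ F, w = a • (x - z)}

/-- Real-valued indicator function of a set. -/
def ind (S : Set V) : V → ℝ := S.indicator 1

/-- The `Γ` function: `Γ(C, x, y) = Σ_{F face of C} (-1)^(dim F) [A(F,C)](x) [F*](y)`. -/
def Γ (C : Set V) (x y : V) : ℝ :=
  ∑ᶠ F ∈ {F : Set V | IsFaceOf F C},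
    (-1 : ℝ) ^ sdim F * ind (angleCone F C) x * ind (dualCone F) y

/-- `F₀` is the minimal face of `C`. -/
def IsMinimalFace (F₀ C : Set V) : Prop :=
  IsFaceOf F₀ C ∧ ∀ F : Set V, IsFaceOf F C → F₀ ⊆ F

/-- A polyhedron: a finite intersection of translates of halfspaces. -/
def IsPolyhedron (P : Set V) : Prop :=
  ∃ s : Finset (V × ℝ), P = ⋂ p ∈ s, {v : V | p.2 ≤ ⟪v, p.1⟫}


/-- halfspace-represented cone -/
def polyC (s : Finset V) : Set V := {v : V | ∀ y ∈ s, 0 ≤ ⟪v, y⟫}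

/-- conic hull of a finite set -/
def coneHull (T : Finset V) : Set V :=
  {v : V | ∃ f : V → ℝ, (∀ y ∈ T, 0 ≤ f y) ∧ v = ∑ y ∈ T, f y • y}

lemma zero_mem_polyC (s : Finset V) : (0:V) ∈ polyC s := by
  intro y hy; simp

lemma polyC_convex (s : Finset V) : Convex ℝ (polyC s) := by
  intro x hx y hy a b ha hb _
  intro z hz
  have := hx z hz; have := hy z hz
  rw [inner_add_left, real_inner_smul_left, real_inner_smul_left]
  positivity

lemma zero_mem_coneHull (T : Finset V) : (0:V) ∈ coneHull T :=
  ⟨0, fun _ _ => le_refl 0, by simp⟩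

lemma coneHull_subset_span (T : Finset V) : coneHull T ⊆ (Submodule.span ℝ (T : Set V) : Set V) := by
  rintro v ⟨f, _, rfl⟩
  exact Submodule.sum_mem _ fun y hy => Submodule.smul_mem _ _ (Submodule.subset_span hy)

lemma mem_coneHull_of_mem {T : Finset V} {y : V} (hy : y ∈ T) : y ∈ coneHull T := by
  refine ⟨fun z => if z = y then 1 else 0, fun z _ => by positivity, ?_⟩
  rw [Finset.sum_eq_single y]
  · simp
  · intro b _ hb; simp [hb]
  · intro h; exact absurd hy h

lemma coneHull_mono {S T : Finset V} (h : S ⊆ T) : coneHull S ⊆ coneHull T := by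
  rintro v ⟨f, hf, rfl⟩
  refine ⟨fun y => if y ∈ S then f y else 0, fun y _ => ?_, ?_⟩
  · dsimp only; split
    · exact hf _ ‹_›
    · exact le_refl 0
  · rw [← Finset.sum_subset h (fun y _ hy => by simp [hy])]
    exact Finset.sum_congr rfl fun y hy => by simp [hy]

lemma coneHull_add {S T : Finset V} {x y : V} (hx : x ∈ coneHull S) (hy : y ∈ coneHull T) :
    x + y ∈ coneHull (S ∪ T) := by
  obtain ⟨f, hf, rfl⟩ := hx
  obtain ⟨g, hg, rfl⟩ := hy
  refine ⟨fun z => (if z ∈ S then f z else 0) + (if z ∈ T then g z else 0), fun z _ => ?_, ?_⟩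
  · have h1 : 0 ≤ (if z ∈ S then f z else 0) := by split; exacts [hf _ ‹_›, le_refl 0]
    have h2 : 0 ≤ (if z ∈ T then g z else 0) := by split; exacts [hg _ ‹_›, le_refl 0]
    dsimp only; linarith
  · simp only [add_smul]
    rw [Finset.sum_add_distrib]
    congr 1
    · rw [← Finset.sum_subset Finset.subset_union_left (fun z _ hz => by simp [hz])]
      exact Finset.sum_congr rfl fun z hz => by simp [hz]
    · rw [← Finset.sum_subset Finset.subset_union_right (fun z _ hz => by simp [hz])]
      exact Finset.sum_congr rfl fun z hz => by simp [hz]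

lemma coneHull_smul {T : Finset V} {x : V} {a : ℝ} (ha : 0 ≤ a) (hx : x ∈ coneHull T) :
    a • x ∈ coneHull T := by
  obtain ⟨f, hf, rfl⟩ := hx
  exact ⟨fun y => a * f y, fun y hy => mul_nonneg ha (hf y hy),
    by rw [Finset.smul_sum]; exact Finset.sum_congr rfl fun y _ => (smul_smul a (f y) y)⟩

lemma coneHull_add_self {T : Finset V} {x y : V} (hx : x ∈ coneHull T) (hy : y ∈ coneHull T) :
    x + y ∈ coneHull T := by
  simpa using coneHull_add hx hy

lemma coneHull_convex (T : Finset V) : Convex ℝ (coneHull T) := by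
  intro x hx y hy a b ha hb _
  exact coneHull_add_self (coneHull_smul ha hx) (coneHull_smul hb hy)

/-- choose a uniform small ε > 0 satisfying finitely many linear constraints -/
lemma exists_eps_le (t : Finset V) (a b : V → ℝ) (hb : ∀ y ∈ t, 0 < b y) :
    ∃ ε : ℝ, 0 < ε ∧ ∀ y ∈ t, ε * a y ≤ b y := by
  classical
  induction t using Finset.induction with
  | empty => exact ⟨1, one_pos, by simp⟩
  | insert z t' hnotmem ih =>
    obtain ⟨ε, hε, hεle⟩ := ih (fun y hy => hb y (Finset.mem_insert_of_mem hy))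
    have hbz : 0 < b z := hb z (Finset.mem_insert_self _ _)
    set δ := min ε (b z / (|a z| + 1)) with hδ
    refine ⟨δ, lt_min hε (by positivity), ?_⟩
    intro y hy
    rcases Finset.mem_insert.1 hy with rfl | hy'
    · have h1 : δ ≤ b y / (|a y| + 1) := min_le_right _ _
      have h2 : δ * a y ≤ δ * |a y| := by
        have : 0 ≤ δ := le_of_lt (lt_min hε (by positivity))
        exact mul_le_mul_of_nonneg_left (le_abs_self _) this
      have h3 : δ * |a y| ≤ (b y / (|a y| + 1)) * |a y| := by
        apply mul_le_mul_of_nonneg_right h1 (abs_nonneg _)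
      have h4 : (b y / (|a y| + 1)) * |a y| ≤ b y := by
        rw [div_mul_eq_mul_div, div_le_iff₀ (by positivity)]
        nlinarith [abs_nonneg (a y), hb y hy]
      linarith
    · rcases le_or_gt (a y) 0 with h | h
      · have hδ0 : 0 < δ := lt_min hε (by positivity)
        have : δ * a y ≤ 0 := mul_nonpos_of_nonneg_of_nonpos hδ0.le h
        linarith [hb y hy]
      · have : δ * a y ≤ ε * a y := mul_le_mul_of_nonneg_right (min_le_left _ _) h.le
        linarith [hεle y hy']

/-- Perturbation lemma for the intrinsic interior: from an intrinsic interior point one can move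
a little bit in any direction of the affine span and stay in the set. -/
lemma exists_eps_mem_of_intrinsicInterior (S : Set V) {z : V} (hz : z ∈ intrinsicInterior ℝ S)
    {d : V} (hd : d ∈ (affineSpan ℝ S).direction) :
    ∃ ε : ℝ, 0 < ε ∧ z + ε • d ∈ S := by
  obtain ⟨p, hp, hpz⟩ := hz
  have hzspan : z ∈ affineSpan ℝ S := hpz ▸ p.2
  have hmem : ∀ t : ℝ, z + t • d ∈ affineSpan ℝ S := by
    intro t
    have := AffineSubspace.vadd_mem_of_mem_direction (Submodule.smul_mem _ t hd) hzspan
    simpa [vadd_eq_add, add_comm] using this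
  set γ : ℝ → affineSpan ℝ S := fun t => ⟨z + t • d, hmem t⟩ with hγ
  have hcont : Continuous γ := by
    apply Continuous.subtype_mk
    continuity
  have hγ0 : γ 0 = p := by
    apply Subtype.ext
    simp [hγ, hpz]
  have hopen : IsOpen (γ ⁻¹' interior (((↑) : affineSpan ℝ S → V) ⁻¹' S)) :=
    isOpen_interior.preimage hcont
  have h0 : (0:ℝ) ∈ γ ⁻¹' interior (((↑) : affineSpan ℝ S → V) ⁻¹' S) := by
    simp only [Set.mem_preimage, hγ0]; exact hp
  obtain ⟨δ, hδ, hball⟩ := Metric.isOpen_iff.1 hopen 0 h0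
  refine ⟨δ/2, by positivity, ?_⟩
  have : (δ/2 : ℝ) ∈ Metric.ball (0:ℝ) δ := by
    simp [abs_of_pos, Real.dist_eq]
    rw [abs_of_pos (by positivity)]
    linarith
  have := hball this
  have := interior_subset this
  simpa using this

lemma direction_affineSpan_zero_mem {S : Set V} (h0 : (0:V) ∈ S) {x : V} (hx : x ∈ S) :
    x ∈ (affineSpan ℝ S).direction := by
  have := AffineSubspace.vsub_mem_direction (subset_affineSpan ℝ S hx) (subset_affineSpan ℝ S h0)
  simpa using this

/-! ### Carathéodory and closedness of finitely generated cones -/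

lemma coneHull_caratheodory_aux :
    ∀ (n : ℕ) (T : Finset V) (f : V → ℝ), (∀ y ∈ T, 0 ≤ f y) →
      (T.filter fun y => f y ≠ 0).card ≤ n →
      ∃ U : Finset V, U ⊆ T ∧ LinearIndependent ℝ (fun i : {x // x ∈ U} => (i : V)) ∧
        (∑ y ∈ T, f y • y) ∈ coneHull U := by
  intro n
  induction n with
  | zero =>
    intro T f hf hcard
    have hzero : ∀ y ∈ T, f y = 0 := by
      intro y hy
      by_contra h
      have : y ∈ T.filter fun y => f y ≠ 0 := Finset.mem_filter.2 ⟨hy, h⟩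
      have := Finset.card_pos.2 ⟨y, this⟩
      omega
    refine ⟨∅, Finset.empty_subset _, ?_, ?_⟩
    · exact linearIndependent_empty_type
    · have : ∑ y ∈ T, f y • y = 0 := Finset.sum_eq_zero fun y hy => by rw [hzero y hy, zero_smul]
      rw [this]; exact zero_mem_coneHull _
  | succ n ih =>
    intro T f hf hcard
    set S := T.filter fun y => f y ≠ 0 with hSdef
    by_cases hind : LinearIndependent ℝ (fun i : {x // x ∈ S} => (i : V))
    · refine ⟨S, Finset.filter_subset _ _, hind, ?_⟩
      have hsum : ∑ y ∈ S, f y • y = ∑ y ∈ T, f y • y := by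
        rw [hSdef]
        apply Finset.sum_filter_of_ne
        intro y _ h hf0
        exact h (by rw [hf0, zero_smul])
      exact hsum ▸ ⟨f, fun y hy => hf y (Finset.filter_subset _ _ hy), rfl⟩
    · obtain ⟨g, hgsum, hgpos⟩ :
          ∃ g : {x // x ∈ S} → ℝ, (∑ i, g i • (i : V)) = 0 ∧ ∃ i, 0 < g i := by
        obtain ⟨g, hgsum, i0, hgi0⟩ := Fintype.not_linearIndependent_iff.1 hind
        rcases lt_or_gt_of_ne hgi0 with h | h
        · refine ⟨-g, ?_, i0, by simpa using h⟩
          simp only [Pi.neg_apply, neg_smul, Finset.sum_neg_distrib, hgsum, neg_zero]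
        · exact ⟨g, hgsum, i0, h⟩
      set gg : V → ℝ := fun y => if h : y ∈ S then g ⟨y, h⟩ else 0 with hggdef
      have hggsum : ∑ y ∈ S, gg y • y = 0 := by
        rw [← Finset.sum_coe_sort S (fun y => gg y • y)]
        rw [← hgsum]
        refine Finset.sum_congr rfl fun i _ => ?_
        simp [hggdef, i.2]
      obtain ⟨i0, hi0⟩ := hgpos
      have hy0 : (i0 : V) ∈ S ∧ 0 < gg (i0 : V) := by
        refine ⟨i0.2, ?_⟩
        simp only [hggdef, i0.2, dif_pos]
        simpa using hi0
      set P := S.filter fun y => 0 < gg y with hPdef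
      have hPne : P.Nonempty := ⟨i0, Finset.mem_filter.2 ⟨hy0.1, hy0.2⟩⟩
      obtain ⟨ym, hymP, hymmin⟩ := Finset.exists_min_image P (fun y => f y / gg y) hPne
      have hymS : ym ∈ S := (Finset.mem_filter.1 hymP).1
      have hgym : 0 < gg ym := (Finset.mem_filter.1 hymP).2
      set t := f ym / gg ym with htdef
      have ht : 0 ≤ t := div_nonneg (hf ym (Finset.filter_subset _ _ hymS)) hgym.le
      set f' : V → ℝ := fun y => f y - t * gg y with hf'def
      have hgg0 : ∀ y, y ∉ S → gg y = 0 := fun y hy => by simp [hggdef, hy]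
      have hf'nonneg : ∀ y ∈ T, 0 ≤ f' y := by
        intro y hy
        simp only [hf'def]
        by_cases hyS : y ∈ S
        · rcases le_or_gt (gg y) 0 with h | h
          · have : t * gg y ≤ 0 := mul_nonpos_of_nonneg_of_nonpos ht h
            linarith [hf y hy]
          · have hyP : y ∈ P := Finset.mem_filter.2 ⟨hyS, h⟩
            have := hymmin y hyP
            rw [div_le_div_iff₀ hgym h] at this
            have h2 : t * gg y ≤ f y := by
              rw [htdef, div_mul_eq_mul_div, div_le_iff₀ hgym]
              linarith
            linarith
        · rw [hgg0 y hyS]; simpa using hf y hy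
      have hsum' : ∑ y ∈ T, f' y • y = ∑ y ∈ T, f y • y := by
        simp only [hf'def, sub_smul, Finset.sum_sub_distrib]
        have : ∑ y ∈ T, (t * gg y) • y = t • ∑ y ∈ S, gg y • y := by
          rw [Finset.smul_sum]
          rw [← Finset.sum_subset (Finset.filter_subset _ T)
            (fun y _ hy => by rw [hgg0 y hy]; simp)]
          exact Finset.sum_congr rfl fun y _ => by rw [smul_smul]
        rw [this, hggsum, smul_zero, sub_zero]
      have hsubset : (T.filter fun y => f' y ≠ 0) ⊆ S.erase ym := by
        intro y hy
        obtain ⟨hyT, hyne⟩ := Finset.mem_filter.1 hy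
        have hyS : y ∈ S := by
          by_contra h
          have hfy : f y = 0 := by
            by_contra h2
            exact h (Finset.mem_filter.2 ⟨hyT, h2⟩)
          exact hyne (by simp [hf'def, hfy, hgg0 y h])
        refine Finset.mem_erase.2 ⟨?_, hyS⟩
        rintro rfl
        apply hyne
        simp only [hf'def, htdef]
        field_simp
        ring
      have hcard' : (T.filter fun y => f' y ≠ 0).card ≤ n := by
        have h1 := Finset.card_le_card hsubset
        have h2 : (S.erase ym).card = S.card - 1 := Finset.card_erase_of_mem hymS
        have h3 : S.card ≤ n + 1 := hcard
        omega
      obtain ⟨U, hUT, hUind, hUmem⟩ := ih T f' hf'nonneg hcard'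
      exact ⟨U, hUT, hUind, hsum' ▸ hUmem⟩

lemma coneHull_caratheodory (T : Finset V) {u : V} (hu : u ∈ coneHull T) :
    ∃ U : Finset V, U ⊆ T ∧ LinearIndependent ℝ (fun i : {x // x ∈ U} => (i : V)) ∧
      u ∈ coneHull U := by
  obtain ⟨f, hf, rfl⟩ := hu
  exact coneHull_caratheodory_aux (T.filter fun y => f y ≠ 0).card T f hf le_rfl

lemma coneHull_eq_image (U : Finset V) :
    coneHull U = (Fintype.linearCombination ℝ (fun i : {x // x ∈ U} => (i : V))) ''
      {g : {x // x ∈ U} → ℝ | ∀ i, 0 ≤ g i} := by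
  ext u
  constructor
  · rintro ⟨f, hf, rfl⟩
    refine ⟨fun i => f i, fun i => hf i i.2, ?_⟩
    rw [Fintype.linearCombination_apply]
    exact Finset.sum_coe_sort U (fun y => f y • y)
  · rintro ⟨g, hg, rfl⟩
    refine ⟨fun y => if h : y ∈ U then g ⟨y, h⟩ else 0, fun y hy => by simp [hy, hg ⟨y, hy⟩], ?_⟩
    rw [Fintype.linearCombination_apply]
    rw [← Finset.sum_coe_sort U (fun y => (if h : y ∈ U then g ⟨y, h⟩ else 0) • y)]
    refine Finset.sum_congr rfl fun i _ => ?_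
    simp [i.2]

lemma coneHull_isClosed_of_linearIndependent (U : Finset V)
    (h : LinearIndependent ℝ (fun i : {x // x ∈ U} => (i : V))) : IsClosed (coneHull U) := by
  rw [coneHull_eq_image]
  have hker : LinearMap.ker (Fintype.linearCombination ℝ (fun i : {x // x ∈ U} => (i : V))) = ⊥ := by
    rw [LinearMap.ker_eq_bot']
    intro g hg
    rw [Fintype.linearCombination_apply] at hg
    exact funext (Fintype.linearIndependent_iff.1 h g hg)
  have hemb := LinearMap.isClosedEmbedding_of_injective hker
  have horth : IsClosed {g : {x // x ∈ U} → ℝ | ∀ i, 0 ≤ g i} := by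
    have : {g : {x // x ∈ U} → ℝ | ∀ i, 0 ≤ g i} = ⋂ i, {g | 0 ≤ g i} := by
      ext g; simp [Set.mem_iInter]
    rw [this]
    exact isClosed_iInter fun i => isClosed_le continuous_const (continuous_apply i)
  exact hemb.isClosedMap _ horth

lemma coneHull_isClosed (T : Finset V) : IsClosed (coneHull T) := by
  have heq : coneHull T = ⋃ U ∈ (T.powerset.filter
      (fun U => LinearIndependent ℝ (fun i : {x // x ∈ U} => (i : V)))), coneHull U := by
    ext u
    constructor
    · intro hu
      obtain ⟨U, hUT, hind, hmem⟩ := coneHull_caratheodory T hu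
      exact Set.mem_biUnion (Finset.mem_filter.2 ⟨Finset.mem_powerset.2 hUT, hind⟩) hmem
    · intro hu
      obtain ⟨U, hU, hmem⟩ := Set.mem_iUnion₂.1 hu
      exact coneHull_mono (Finset.mem_powerset.1 (Finset.mem_filter.1 hU).1) hmem
  rw [heq]
  apply Set.Finite.isClosed_biUnion (Finset.finite_toSet _)
  intro U hU
  exact coneHull_isClosed_of_linearIndependent U (Finset.mem_filter.1 hU).2


/-! ### Farkas: the dual of `polyC T` is the cone generated by `T` -/

lemma inner_sum_coneHull {T : Finset V} {u c : V} (f : V → ℝ)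
    (hu : u = ∑ y ∈ T, f y • y) : ⟪u, c⟫ = ∑ y ∈ T, f y * ⟪y, c⟫ := by
  rw [hu, sum_inner]
  exact Finset.sum_congr rfl fun y _ => real_inner_smul_left _ _ _

lemma coneHull_subset_dualCone_polyC (T : Finset V) : coneHull T ⊆ dualCone (polyC T) := by
  rintro u ⟨f, hf, rfl⟩
  intro c hc
  rw [inner_sum_coneHull f rfl]
  apply Finset.sum_nonneg
  intro y hy
  have := hc y hy
  exact mul_nonneg (hf y hy) (by rwa [real_inner_comm])

lemma dualCone_polyC (T : Finset V) : dualCone (polyC T) = coneHull T := by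
  apply Set.Subset.antisymm _ (coneHull_subset_dualCone_polyC T)
  intro u hu
  by_contra hnot
  obtain ⟨φ, c, hlt, hc⟩ := geometric_hahn_banach_closed_point (coneHull_convex T)
    (coneHull_isClosed T) hnot
  have hc0 : (0:ℝ) < c := by simpa using hlt 0 (zero_mem_coneHull T)
  have hnonpos : ∀ a ∈ coneHull T, φ a ≤ 0 := by
    intro a ha
    by_contra h
    push_neg at h
    obtain ⟨m, hm⟩ := exists_nat_gt (c / φ a)
    have hma : (m : ℝ) • a ∈ coneHull T := coneHull_smul (by positivity) ha
    have := hlt _ hma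
    rw [map_smul, smul_eq_mul] at this
    rw [div_lt_iff₀ h] at hm
    linarith
  set v : V := -((InnerProductSpace.toDual ℝ V).symm φ) with hv
  have hvinner : ∀ x : V, ⟪v, x⟫ = -φ x := by
    intro x
    rw [hv, inner_neg_left, InnerProductSpace.toDual_symm_apply]
  have hvC : v ∈ polyC T := by
    intro y hy
    rw [hvinner]
    simpa using hnonpos y (mem_coneHull_of_mem hy)
  have := hu v hvC
  rw [real_inner_comm, hvinner] at this
  linarith

/-! ### Faces of halfspace-represented cones -/

/-- The indices of `s` whose hyperplane contains `G`. -/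
def faceIdx (s : Finset V) (G : Set V) : Finset V :=
  s.filter fun y => ∀ v ∈ G, ⟪v, y⟫ = 0

lemma faceIdx_subset (s : Finset V) (G : Set V) : faceIdx s G ⊆ s :=
  Finset.filter_subset _ _

lemma inner_eq_zero_of_mem_faceIdx {s : Finset V} {G : Set V} {v y : V}
    (hv : v ∈ G) (hy : y ∈ faceIdx s G) : ⟪v, y⟫ = 0 :=
  (Finset.mem_filter.1 hy).2 v hv

section Face

variable {s : Finset V} {G : Set V}

lemma IsFaceOf.subset' (hG : IsFaceOf G (polyC s)) : G ⊆ polyC s := by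
  obtain ⟨w, _, rfl⟩ := hG; exact Set.inter_subset_left

lemma IsFaceOf.zero_mem' (hG : IsFaceOf G (polyC s)) : (0:V) ∈ G := by
  obtain ⟨w, _, rfl⟩ := hG
  exact ⟨zero_mem_polyC s, by simp⟩

lemma IsFaceOf.add_mem' (hG : IsFaceOf G (polyC s)) {u v : V} (hu : u ∈ G) (hv : v ∈ G) :
    u + v ∈ G := by
  obtain ⟨w, _, rfl⟩ := hG
  refine ⟨fun y hy => ?_, ?_⟩
  · rw [inner_add_left]
    exact add_nonneg (hu.1 y hy) (hv.1 y hy)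
  · have h1 := hu.2
    have h2 := hv.2
    simp only [Set.mem_setOf_eq] at h1 h2 ⊢
    rw [inner_add_left, h1, h2, add_zero]

lemma IsFaceOf.sum_mem' (hG : IsFaceOf G (polyC s)) {ι : Type*} (t : Finset ι) (p : ι → V)
    (hp : ∀ i ∈ t, p i ∈ G) : (∑ i ∈ t, p i) ∈ G := by
  classical
  induction t using Finset.induction with
  | empty => simpa using hG.zero_mem'
  | insert a t' hnotmem ih =>
    rw [Finset.sum_insert hnotmem]
    exact hG.add_mem' (hp a (Finset.mem_insert_self _ _))
      (ih fun i hi => hp i (Finset.mem_insert_of_mem hi))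

lemma IsFaceOf.convex' (hG : IsFaceOf G (polyC s)) : Convex ℝ G := by
  obtain ⟨w, _, rfl⟩ := hG
  refine (polyC_convex s).inter ?_
  intro x hx y hy a b ha hb _
  simp only [Set.mem_setOf_eq] at hx hy ⊢
  rw [inner_add_left, real_inner_smul_left, real_inner_smul_left, hx, hy]
  ring

/-- A generic point of a face: a point of `G` on which all the "non-identically-zero"
constraints are strictly positive. -/
lemma IsFaceOf.exists_generic (hG : IsFaceOf G (polyC s)) :
    ∃ z ∈ G, ∀ y ∈ s, y ∉ faceIdx s G → 0 < ⟪z, y⟫ := by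
  have hch : ∀ y : V, y ∈ s \ faceIdx s G → ∃ x, x ∈ G ∧ 0 < ⟪x, y⟫ := by
    intro y hy
    obtain ⟨hys, hyn⟩ := Finset.mem_sdiff.1 hy
    have : ¬∀ v ∈ G, ⟪v, y⟫ = 0 := fun h => hyn (Finset.mem_filter.2 ⟨hys, h⟩)
    push_neg at this
    obtain ⟨x, hxG, hx0⟩ := this
    exact ⟨x, hxG, lt_of_le_of_ne (hG.subset' hxG y hys) (Ne.symm hx0)⟩
  set h : V → V := fun y => if hy : ∃ x, x ∈ G ∧ 0 < ⟪x, y⟫ then hy.choose else 0 with hh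
  have hhG : ∀ y ∈ s \ faceIdx s G, h y ∈ G ∧ 0 < ⟪h y, y⟫ := by
    intro y hy
    obtain ⟨x, hx⟩ := hch y hy
    have hex : ∃ x, x ∈ G ∧ 0 < ⟪x, y⟫ := ⟨x, hx⟩
    simp only [hh, dif_pos hex]
    exact hex.choose_spec
  refine ⟨∑ y ∈ s \ faceIdx s G, h y, hG.sum_mem' _ _ (fun y hy => (hhG y hy).1), ?_⟩
  intro y hys hyn
  have hymem : y ∈ s \ faceIdx s G := Finset.mem_sdiff.2 ⟨hys, hyn⟩
  rw [sum_inner]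
  apply Finset.sum_pos'
  · intro i hi
    exact (hG.subset' (hhG i hi).1) y hys
  · exact ⟨y, hymem, (hhG y hymem).2⟩

/-- Normal form of a face. -/
lemma IsFaceOf.eq_inter (hG : IsFaceOf G (polyC s)) :
    G = polyC s ∩ {v | ∀ y ∈ faceIdx s G, ⟪v, y⟫ = 0} := by
  obtain ⟨z, hzG, hzpos⟩ := hG.exists_generic
  obtain ⟨w, hsub, hGeq⟩ := hG
  apply Set.Subset.antisymm
  · intro v hv
    have hvC : v ∈ polyC s := by rw [hGeq] at hv; exact hv.1
    exact ⟨hvC, fun y hy => inner_eq_zero_of_mem_faceIdx hv hy⟩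
  · rintro v ⟨hvC, hvperp⟩
    obtain ⟨ε, hε, hεle⟩ := exists_eps_le (s \ faceIdx s G) (fun y => ⟪v, y⟫)
      (fun y => ⟪z, y⟫) (fun y hy => by
        obtain ⟨h1, h2⟩ := Finset.mem_sdiff.1 hy
        exact hzpos y h1 h2)
    have hzw : ⟪z, w⟫ = 0 := by rw [hGeq] at hzG; exact hzG.2
    set p : V := (1 + ε) • z - ε • v with hp
    have hpC : p ∈ polyC s := by
      intro y hy
      rw [hp, inner_sub_left, real_inner_smul_left, real_inner_smul_left]
      by_cases hyf : y ∈ faceIdx s G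
      · rw [inner_eq_zero_of_mem_faceIdx hzG hyf, hvperp y hyf]; simp
      · have h1 := hεle y (Finset.mem_sdiff.2 ⟨hy, hyf⟩)
        have h2 : 0 < ⟪z, y⟫ := hzpos y hy hyf
        nlinarith
    have hpw : 0 ≤ ⟪p, w⟫ := hsub hpC
    rw [hp, inner_sub_left, real_inner_smul_left, real_inner_smul_left, hzw] at hpw
    have hvw : ⟪v, w⟫ ≤ 0 := by nlinarith
    have hvw' : 0 ≤ ⟪v, w⟫ := hsub hvC
    rw [hGeq]
    exact ⟨hvC, le_antisymm hvw hvw'⟩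

/-- Any coordinate intersection is a face. -/
lemma isFaceOf_inter_perp (s S : Finset V) (hS : S ⊆ s) :
    IsFaceOf (polyC s ∩ {v | ∀ y ∈ S, ⟪v, y⟫ = 0}) (polyC s) := by
  refine ⟨∑ y ∈ S, y, ?_, ?_⟩
  · intro v hv
    simp only [Set.mem_setOf_eq, inner_sum]
    exact Finset.sum_nonneg fun y hy => hv y (hS hy)
  · ext v
    simp only [Set.mem_inter_iff, Set.mem_setOf_eq, inner_sum]
    constructor
    · rintro ⟨hvC, hvp⟩
      exact ⟨hvC, Finset.sum_eq_zero hvp⟩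
    · rintro ⟨hvC, hvs⟩
      refine ⟨hvC, fun y hy => ?_⟩
      have := (Finset.sum_eq_zero_iff_of_nonneg (fun y hy => hvC y (hS hy))).1 hvs
      exact this y hy

/-- Points of the intrinsic interior of a face satisfy the non-face constraints strictly. -/
lemma IsFaceOf.intrinsicInterior_pos (hG : IsFaceOf G (polyC s)) {z : V}
    (hz : z ∈ intrinsicInterior ℝ G) : ∀ y ∈ s, y ∉ faceIdx s G → 0 < ⟪z, y⟫ := by
  intro y hys hyn
  have hzG : z ∈ G := intrinsicInterior_subset hz
  have h0 : 0 ≤ ⟪z, y⟫ := hG.subset' hzG y hys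
  rcases h0.lt_or_eq with h | h
  · exact h
  · exfalso
    have : ¬∀ v ∈ G, ⟪v, y⟫ = 0 := fun hc => hyn (Finset.mem_filter.2 ⟨hys, hc⟩)
    push_neg at this
    obtain ⟨x, hxG, hx0⟩ := this
    have hxpos : 0 < ⟪x, y⟫ := lt_of_le_of_ne (hG.subset' hxG y hys) (Ne.symm hx0)
    have hd : z - x ∈ (affineSpan ℝ G).direction := by
      have := AffineSubspace.vsub_mem_direction (subset_affineSpan ℝ G hzG)
        (subset_affineSpan ℝ G hxG)
      simpa using this
    obtain ⟨ε, hε, hmem⟩ := exists_eps_mem_of_intrinsicInterior G hz hd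
    have := hG.subset' hmem y hys
    rw [inner_add_left, real_inner_smul_left, inner_sub_left, ← h] at this
    nlinarith

/-- The angle cone of a face, computed from the halfspace representation. -/
lemma IsFaceOf.angleCone_eq (hG : IsFaceOf G (polyC s)) :
    angleCone G (polyC s) = polyC (faceIdx s G) := by
  apply Set.Subset.antisymm
  · rintro w ⟨a, ha, x, hx, z, hz, rfl⟩
    intro y hy
    have hzG : z ∈ G := intrinsicInterior_subset hz
    rw [real_inner_smul_left, inner_sub_left, inner_eq_zero_of_mem_faceIdx hzG hy, sub_zero]
    exact mul_nonneg ha.le (hx y (faceIdx_subset s G hy))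
  · intro v hv
    have hGne : G.Nonempty := ⟨0, hG.zero_mem'⟩
    obtain ⟨z₀, hz₀⟩ := hGne.intrinsicInterior hG.convex'
    have hz₀G : z₀ ∈ G := intrinsicInterior_subset hz₀
    obtain ⟨ε, hε, hεle⟩ := exists_eps_le (s \ faceIdx s G) (fun y => -⟪v, y⟫)
      (fun y => ⟪z₀, y⟫) (fun y hy => by
        obtain ⟨h1, h2⟩ := Finset.mem_sdiff.1 hy
        exact hG.intrinsicInterior_pos hz₀ y h1 h2)
    have hxC : z₀ + ε • v ∈ polyC s := by
      intro y hy
      rw [inner_add_left, real_inner_smul_left]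
      by_cases hyf : y ∈ faceIdx s G
      · rw [inner_eq_zero_of_mem_faceIdx hz₀G hyf, zero_add]
        exact mul_nonneg hε.le (hv y hyf)
      · have := hεle y (Finset.mem_sdiff.2 ⟨hy, hyf⟩)
        nlinarith
    refine ⟨ε⁻¹, by positivity, z₀ + ε • v, hxC, z₀, hz₀, ?_⟩
    rw [add_sub_cancel_left, smul_smul, inv_mul_cancel₀ hε.ne', one_smul]
end Face

/-! ### Faces of finitely generated cones -/

lemma coneHull_inter_perp (T : Finset V) {w : V} (hw : ∀ y ∈ T, 0 ≤ ⟪y, w⟫) :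
    coneHull T ∩ {u : V | ⟪u, w⟫ = 0} = coneHull (T.filter fun y => ⟪y, w⟫ = 0) := by
  apply Set.Subset.antisymm
  · rintro u ⟨⟨f, hf, rfl⟩, hu0⟩
    simp only [Set.mem_setOf_eq] at hu0
    rw [inner_sum_coneHull f rfl] at hu0
    have hterm : ∀ y ∈ T, f y * ⟪y, w⟫ = 0 :=
      (Finset.sum_eq_zero_iff_of_nonneg
        (fun y hy => mul_nonneg (hf y hy) (hw y hy))).1 hu0
    have hvanish : ∀ y ∈ T, y ∉ T.filter (fun y => ⟪y, w⟫ = 0) → f y • y = (0:V) := by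
      intro y hyT hyn
      have hfy : f y = 0 := by
        have h1 := hterm y hyT
        have h2 : ⟪y, w⟫ ≠ 0 := fun h => hyn (Finset.mem_filter.2 ⟨hyT, h⟩)
        exact (mul_eq_zero.1 h1).resolve_right h2
      rw [hfy, zero_smul]
    refine ⟨f, fun y hy => hf y (Finset.filter_subset _ _ hy), ?_⟩
    rw [← Finset.sum_subset (Finset.filter_subset _ T) hvanish]
  · rintro u ⟨f, hf, rfl⟩
    constructor
    · exact coneHull_mono (Finset.filter_subset _ _) ⟨f, hf, rfl⟩
    · simp only [Set.mem_setOf_eq]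
      rw [inner_sum_coneHull f rfl]
      apply Finset.sum_eq_zero
      intro y hy
      rw [(Finset.mem_filter.1 hy).2, mul_zero]

lemma isFaceOf_coneHull {S T : Finset V} (hST : S ⊆ T) {z : V}
    (h1 : ∀ y ∈ T, 0 ≤ ⟪y, z⟫) (h2 : ∀ y ∈ T, (⟪y, z⟫ = 0 ↔ y ∈ S)) :
    IsFaceOf (coneHull S) (coneHull T) := by
  refine ⟨z, ?_, ?_⟩
  · rintro u ⟨f, hf, rfl⟩
    have : (0:ℝ) ≤ ⟪∑ y ∈ T, f y • y, z⟫ := by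
      rw [inner_sum_coneHull f rfl]
      exact Finset.sum_nonneg fun y hy => mul_nonneg (hf y hy) (h1 y hy)
    exact this
  · rw [coneHull_inter_perp T h1]
    have hfil : T.filter (fun y => ⟪y, z⟫ = 0) = S := by
      ext y
      simp only [Finset.mem_filter]
      constructor
      · rintro ⟨hyT, hy0⟩; exact (h2 y hyT).1 hy0
      · intro hyS; exact ⟨hST hyS, (h2 y (hST hyS)).2 hyS⟩
    rw [hfil]

lemma neg_mem_coneHull_image {S : Finset V} {z : V} (hz : z ∈ coneHull S) :
    -z ∈ coneHull (S.image Neg.neg) := by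
  obtain ⟨f, hf, rfl⟩ := hz
  refine ⟨fun u => f (-u), fun u hu => ?_, ?_⟩
  · obtain ⟨y, hy, rfl⟩ := Finset.mem_image.1 hu
    simpa using hf y hy
  · rw [Finset.sum_image (fun x _ y _ h => neg_injective h), ← Finset.sum_neg_distrib]
    exact Finset.sum_congr rfl fun y _ => by simp

/-- The angle cone of a face of a finitely generated cone. -/
lemma angleCone_coneHull {S T : Finset V} (hST : S ⊆ T) :
    angleCone (coneHull S) (coneHull T) = coneHull (T ∪ S.image Neg.neg) := by
  apply Set.Subset.antisymm
  · rintro w ⟨a, ha, x, hx, z, hz, rfl⟩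
    have hzS : z ∈ coneHull S := intrinsicInterior_subset hz
    have h1 : a • x ∈ coneHull T := coneHull_smul ha.le hx
    have h2 : a • (-z) ∈ coneHull (S.image Neg.neg) :=
      coneHull_smul ha.le (neg_mem_coneHull_image hzS)
    have := coneHull_add h1 h2
    simpa [smul_sub, sub_eq_add_neg, smul_neg] using this
  · rintro u ⟨f, hf, rfl⟩
    set I := S.image (Neg.neg : V → V) with hI
    have hsplit : ∑ y ∈ T ∪ I, f y • y = (∑ y ∈ T, f y • y) + ∑ y ∈ I \ T, f y • y := by
      rw [← Finset.union_sdiff_self_eq_union, Finset.sum_union Finset.disjoint_sdiff]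
    set p := ∑ y ∈ T, f y • y with hp
    set q := ∑ y ∈ I \ T, f y • y with hq
    have hpT : p ∈ coneHull T := ⟨f, fun y hy => hf y (Finset.mem_union_left _ hy), rfl⟩
    have hqspan : q ∈ Submodule.span ℝ (S : Set V) := by
      apply Submodule.sum_mem
      intro y hy
      obtain ⟨y₀, hy₀, rfl⟩ := Finset.mem_image.1 (Finset.mem_sdiff.1 hy).1
      exact Submodule.smul_mem _ _ (Submodule.neg_mem _ (Submodule.subset_span hy₀))
    have hSconv : Convex ℝ (coneHull S) := coneHull_convex S
    have hSne : (coneHull S).Nonempty := ⟨0, zero_mem_coneHull S⟩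
    obtain ⟨z₁, hz₁⟩ := hSne.intrinsicInterior hSconv
    have hqdir : q ∈ (affineSpan ℝ (coneHull S)).direction := by
      have hle : Submodule.span ℝ (S : Set V) ≤ (affineSpan ℝ (coneHull S)).direction := by
        apply Submodule.span_le.2
        intro y hy
        exact direction_affineSpan_zero_mem (zero_mem_coneHull S) (mem_coneHull_of_mem hy)
      exact hle hqspan
    obtain ⟨ε, hε, hmem⟩ := exists_eps_mem_of_intrinsicInterior (coneHull S) hz₁ hqdir
    refine ⟨ε⁻¹, by positivity, ε • (∑ y ∈ T ∪ I, f y • y) + z₁, ?_, z₁, hz₁, ?_⟩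
    · have : ε • (∑ y ∈ T ∪ I, f y • y) + z₁ = ε • p + (z₁ + ε • q) := by
        rw [hsplit]; module
      rw [this]
      exact coneHull_add_self (coneHull_smul hε.le hpT) (coneHull_mono hST hmem)
    · rw [add_sub_cancel_right, smul_smul, inv_mul_cancel₀ hε.ne', one_smul]

/-! ### Putting things together -/

lemma perp_coneHull_iff (T : Finset V) (v : V) :
    (∀ u ∈ coneHull T, ⟪v, u⟫ = 0) ↔ ∀ y ∈ T, ⟪v, y⟫ = 0 := by
  constructor
  · intro h y hy; exact h y (mem_coneHull_of_mem hy)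
  · rintro h u ⟨f, hf, rfl⟩
    rw [inner_sum]
    apply Finset.sum_eq_zero
    intro y hy
    rw [real_inner_smul_right, h y hy, mul_zero]

lemma IsFaceOf.dual_angleCone {s : Finset V} {G : Set V} (hG : IsFaceOf G (polyC s)) :
    dualCone (angleCone G (polyC s)) = coneHull (faceIdx s G) := by
  rw [hG.angleCone_eq, dualCone_polyC]

lemma faceIdx_anti {s : Finset V} {F G : Set V} (hFG : F ⊆ G) :
    faceIdx s G ⊆ faceIdx s F := by
  intro y hy
  obtain ⟨hys, hyp⟩ := Finset.mem_filter.1 hy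
  exact Finset.mem_filter.2 ⟨hys, fun v hv => hyp v (hFG hv)⟩

lemma face_order_iff {s : Finset V} {G G' : Set V} (hG : IsFaceOf G (polyC s))
    (hG' : IsFaceOf G' (polyC s)) :
    G ⊆ G' ↔ coneHull (faceIdx s G') ⊆ coneHull (faceIdx s G) := by
  constructor
  · intro h; exact coneHull_mono (faceIdx_anti h)
  · intro h v hv
    have hv1 := hG.eq_inter ▸ hv
    obtain ⟨hvC, hvperp⟩ := hv1
    have hperpHull : ∀ u ∈ coneHull (faceIdx s G), ⟪v, u⟫ = 0 :=
      (perp_coneHull_iff _ v).2 hvperp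
    have hperp' : ∀ y ∈ faceIdx s G', ⟪v, y⟫ = 0 :=
      (perp_coneHull_iff _ v).1 fun u hu => hperpHull u (h hu)
    rw [hG'.eq_inter]
    exact ⟨hvC, hperp'⟩

lemma face_maps_to {s : Finset V} {F G : Set V} (hF : IsFaceOf F (polyC s))
    (hG : IsFaceOf G (polyC s)) (hFG : F ⊆ G) :
    IsFaceOf (coneHull (faceIdx s G)) (coneHull (faceIdx s F)) := by
  obtain ⟨z, hzG, hzpos⟩ := hG.exists_generic
  apply isFaceOf_coneHull (faceIdx_anti hFG) (z := z)
  · intro y hy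
    rw [real_inner_comm]
    exact hG.subset' hzG y (faceIdx_subset s F hy)
  · intro y hy
    constructor
    · intro h0
      by_contra hyn
      have := hzpos y (faceIdx_subset s F hy) hyn
      rw [real_inner_comm] at h0
      linarith
    · intro hyG
      rw [real_inner_comm]
      exact inner_eq_zero_of_mem_faceIdx hzG hyG

lemma face_surj {s : Finset V} {F : Set V} (hF : IsFaceOf F (polyC s)) {A : Set V}
    (hA : IsFaceOf A (coneHull (faceIdx s F))) :
    ∃ G : Set V, IsFaceOf G (polyC s) ∧ F ⊆ G ∧
      coneHull (faceIdx s G) = A := by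
  obtain ⟨w, hw, hAeq⟩ := hA
  have hw' : ∀ y ∈ faceIdx s F, 0 ≤ ⟪y, w⟫ := fun y hy => hw (mem_coneHull_of_mem hy)
  set Sfil := (faceIdx s F).filter (fun y => ⟪y, w⟫ = 0) with hSfil
  have hAcone : A = coneHull Sfil := by
    rw [hAeq, coneHull_inter_perp _ hw']
  set G := polyC s ∩ {v | ∀ y ∈ Sfil, ⟪v, y⟫ = 0} with hGdef
  have hSfilF : Sfil ⊆ faceIdx s F := Finset.filter_subset _ _
  have hGface : IsFaceOf G (polyC s) :=
    isFaceOf_inter_perp s Sfil (hSfilF.trans (faceIdx_subset s F))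
  have hFG : F ⊆ G := by
    intro v hv
    refine ⟨hF.subset' hv, fun y hy => inner_eq_zero_of_mem_faceIdx hv (hSfilF hy)⟩
  refine ⟨G, hGface, hFG, ?_⟩
  have hidx : faceIdx s G = Sfil := by
    apply Finset.Subset.antisymm
    · intro y hy
      have hyF : y ∈ faceIdx s F := faceIdx_anti hFG hy
      have hyw : 0 ≤ ⟪y, w⟫ := hw' y hyF
      rcases hyw.eq_or_lt with h | h
      · exact Finset.mem_filter.2 ⟨hyF, h.symm⟩
      · exfalso
        obtain ⟨z, hzF, hzpos⟩ := hF.exists_generic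
        obtain ⟨ε, hε, hεle⟩ := exists_eps_le (s \ faceIdx s F) (fun y' => -⟪w, y'⟫)
          (fun y' => ⟪z, y'⟫) (fun y' hy' => by
            obtain ⟨h1, h2⟩ := Finset.mem_sdiff.1 hy'
            exact hzpos y' h1 h2)
        have hvC : z + ε • w ∈ polyC s := by
          intro y' hy'
          rw [inner_add_left, real_inner_smul_left]
          by_cases hyf : y' ∈ faceIdx s F
          · rw [inner_eq_zero_of_mem_faceIdx hzF hyf, zero_add, real_inner_comm]
            exact mul_nonneg hε.le (hw' y' hyf)
          · have := hεle y' (Finset.mem_sdiff.2 ⟨hy', hyf⟩)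
            nlinarith
        have hvG : z + ε • w ∈ G := by
          refine ⟨hvC, fun y' hy' => ?_⟩
          rw [inner_add_left, real_inner_smul_left,
            inner_eq_zero_of_mem_faceIdx hzF (hSfilF hy'), real_inner_comm,
            (Finset.mem_filter.1 hy').2]
          ring
        have hy0 : ⟪z + ε • w, y⟫ = 0 := (Finset.mem_filter.1 hy).2 _ hvG
        rw [inner_add_left, real_inner_smul_left,
          inner_eq_zero_of_mem_faceIdx hzF hyF, real_inner_comm] at hy0
        nlinarith
    · intro y hy
      refine Finset.mem_filter.2 ⟨faceIdx_subset s F (hSfilF hy), ?_⟩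
      intro v hv
      exact hv.2 y hy
  rw [hidx, hAcone]

/-- The third part: computation of both sides of the angle-cone identity. -/
lemma face_part3 {s : Finset V} {F G : Set V} (hF : IsFaceOf F (polyC s))
    (hG : IsFaceOf G (polyC s)) (hFG : F ⊆ G) :
    angleCone (coneHull (faceIdx s G)) (coneHull (faceIdx s F)) =
      dualCone (angleCone F G) := by
  set I := (faceIdx s G).image (Neg.neg : V → V) with hI
  set s' := s ∪ I with hs'
  have hGs' : G = polyC s' := by
    rw [hG.eq_inter]
    ext v
    constructor
    · rintro ⟨hvC, hvperp⟩
      intro y hy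
      rcases Finset.mem_union.1 hy with h | h
      · exact hvC y h
      · obtain ⟨y₀, hy₀, rfl⟩ := Finset.mem_image.1 h
        rw [inner_neg_right, hvperp y₀ hy₀, neg_zero]
    · intro hv
      refine ⟨fun y hy => hv y (Finset.mem_union_left _ hy), fun y hy => ?_⟩
      have h1 : 0 ≤ ⟪v, y⟫ := hv y (Finset.mem_union_left _ (faceIdx_subset s G hy))
      have h2 : 0 ≤ ⟪v, -y⟫ := hv (-y) (Finset.mem_union_right _
        (Finset.mem_image.2 ⟨y, hy, rfl⟩))
      rw [inner_neg_right] at h2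
      linarith
  have hFface' : IsFaceOf F (polyC s') := by
    obtain ⟨w, hsub, heq⟩ := hF
    have hs'sub : polyC s' ⊆ polyC s := fun v hv y hy => hv y (Finset.mem_union_left _ hy)
    refine ⟨w, fun v hv => hsub (hs'sub hv), ?_⟩
    apply Set.Subset.antisymm
    · intro v hv
      have hvF := hv
      rw [heq] at hvF
      refine ⟨?_, hvF.2⟩
      rw [← hGs']
      exact hFG hv
    · rintro v ⟨hv1, hv2⟩
      rw [heq]
      exact ⟨hs'sub hv1, hv2⟩
  have hidx' : faceIdx s' F = faceIdx s F ∪ I := by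
    ext y
    simp only [faceIdx, Finset.mem_filter, Finset.mem_union, hs']
    constructor
    · rintro ⟨hy | hy, hperp⟩
      · exact Or.inl ⟨hy, hperp⟩
      · exact Or.inr hy
    · rintro (⟨hy, hperp⟩ | hy)
      · exact ⟨Or.inl hy, hperp⟩
      · refine ⟨Or.inr hy, ?_⟩
        obtain ⟨y₀, hy₀, rfl⟩ := Finset.mem_image.1 hy
        intro v hv
        rw [inner_neg_right, inner_eq_zero_of_mem_faceIdx (hFG hv) hy₀, neg_zero]
    
  have hRHS : dualCone (angleCone F G) = coneHull (faceIdx s F ∪ I) := by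
    rw [hGs', hFface'.angleCone_eq, dualCone_polyC, hidx']
  rw [angleCone_coneHull (faceIdx_anti hFG), hRHS]


theorem stmt7 (C F : Set V) (hC : IsPolyCone C) (hF : IsFaceOf F C) :
    Set.BijOn (fun G : Set V => dualCone (angleCone G C))
        {G : Set V | IsFaceOf G C ∧ F ⊆ G}
        {A : Set V | IsFaceOf A (dualCone (angleCone F C))} ∧
    (∀ G G' : Set V, IsFaceOf G C → F ⊆ G → IsFaceOf G' C → F ⊆ G' →
        (G ⊆ G' ↔ dualCone (angleCone G' C) ⊆ dualCone (angleCone G C))) ∧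
    (∀ G : Set V, IsFaceOf G C → F ⊆ G →
        angleCone (dualCone (angleCone G C)) (dualCone (angleCone F C)) =
          dualCone (angleCone F G)) := by
  obtain ⟨s, hCs⟩ := hC
  have hCeq : C = polyC s := by
    rw [hCs]; ext v; simp [polyC, Set.mem_iInter]
  subst hCeq
  refine ⟨⟨?_, ?_, ?_⟩, ?_, ?_⟩
  · -- MapsTo
    rintro G ⟨hG, hFG⟩
    show IsFaceOf (dualCone (angleCone G (polyC s))) _
    rw [hF.dual_angleCone, hG.dual_angleCone]
    exact face_maps_to hF hG hFG
  · -- InjOn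
    rintro G ⟨hG, hFG⟩ G' ⟨hG', hFG'⟩ heq
    simp only at heq
    rw [hG.dual_angleCone, hG'.dual_angleCone] at heq
    exact Set.Subset.antisymm
      ((face_order_iff hG hG').2 heq.ge)
      ((face_order_iff hG' hG).2 heq.le)
  · -- SurjOn
    rintro A hA
    have hA' : IsFaceOf A (coneHull (faceIdx s F)) := by
      have := hA
      simp only [Set.mem_setOf_eq] at this
      rwa [hF.dual_angleCone] at this
    obtain ⟨G, hGface, hFG, hGA⟩ := face_surj hF hA'
    refine ⟨G, ⟨hGface, hFG⟩, ?_⟩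
    show dualCone (angleCone G (polyC s)) = A
    rw [hGface.dual_angleCone]
    exact hGA
  · -- order reversal
    intro G G' hG hFG hG' hFG'
    rw [hG.dual_angleCone, hG'.dual_angleCone]
    exact face_order_iff hG hG'
  · -- angle cone identity
    intro G hG hFG
    rw [hF.dual_angleCone, hG.dual_angleCone]
    exact face_part3 hF hG hFG
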